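/- arXiv:1202.3399 — 2 statements merged into one kernel-verified Lean document; each statement's English description precedes it below -/
import Mathlib

section
/- Let W be the block matrix [W₁; W₂] obtained by stacking W₁ (m₁×n) on top of W₂ (m₂×n). Then the sum of the singular values of W is at most the sum of the singular values of W₁ plus the sum of the singular values of W₂, i.e., trace(√(WᵀW)) ≤ trace(√(W₁ᵀW₁)) + trace(√(W₂ᵀW₂)). -/
open Matrix

section
open scoped ComplexOrder

/-- The positive semidefinite square root of a positive semidefinite matrix (the definition
`Matrix.PosSemidef.sqrt` of the older Mathlib, removed since). -/
noncomputable def Matrix.PosSemidef.sqrt {n 𝕜 : Type*} [Fintype n] [DecidableEq n] [RCLike 𝕜]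
    {A : Matrix n n 𝕜} (hA : A.PosSemidef) : Matrix n n 𝕜 :=
  hA.1.eigenvectorUnitary.1 * diagonal ((↑) ∘ (√·) ∘ hA.1.eigenvalues) *
  (star hA.1.eigenvectorUnitary : Matrix n n 𝕜)

end

namespace StackNucAux

variable {n : Type*} [Fintype n] [DecidableEq n]

lemma trace_sqrt {M : Matrix n n ℝ} (hM : M.PosSemidef) :
    hM.sqrt.trace = ∑ i, Real.sqrt (hM.1.eigenvalues i) := by
  rw [Matrix.PosSemidef.sqrt, Matrix.trace_mul_cycle,
    Unitary.coe_star_mul_self, one_mul, trace_diagonal]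
  rfl

lemma psd_diag_nonneg {M : Matrix n n ℝ} (hM : M.PosSemidef) (j : n) : 0 ≤ M j j := by
  have := hM.2 (Finsupp.single j 1)
  simpa using this

lemma trace_le {m : Type*} [Fintype m] (W X : Matrix m n ℝ)
    (hM : (Wᵀ * W).PosSemidef) (hX : (1 - Xᵀ * X).PosSemidef) :
    (Xᵀ * W).trace ≤ hM.sqrt.trace := by
  classical
  set hH := hM.1 with hHdef
  set U : Matrix n n ℝ := (hH.eigenvectorUnitary : Matrix n n ℝ) with hUdef
  have hsU : star U = Uᵀ := by
    rw [star_eq_conjTranspose, conjTranspose_eq_transpose_of_trivial]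
  have hUU : Uᵀ * U = 1 := by rw [← hsU]; exact Unitary.coe_star_mul_self _
  have hUU' : U * Uᵀ = 1 := by rw [← hsU]; exact Unitary.coe_mul_star_self _
  set d := hH.eigenvalues with hddef
  have hdiag : Uᵀ * (Wᵀ * W) * U = diagonal d := by
    rw [← hsU]; have := hH.conjStarAlgAut_star_eigenvectorUnitary; rw [Unitary.conjStarAlgAut_star_apply] at this; simpa using this
  have hd0 : ∀ i, 0 ≤ d i := hM.eigenvalues_nonneg
  set Y := X * U with hY
  set Z := W * U with hZ
  have htr : (Xᵀ * W).trace = (Yᵀ * Z).trace := by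
    have e : Yᵀ * Z = Uᵀ * (Xᵀ * W * U) := by
      rw [hY, hZ, transpose_mul]; simp only [Matrix.mul_assoc]
    rw [e, Matrix.trace_mul_comm Uᵀ, Matrix.mul_assoc (Xᵀ * W), hUU', mul_one]
  have hZcol : ∀ j, ∑ i, Z i j ^ 2 = d j := by
    intro j
    have h : (Zᵀ * Z) j j = diagonal d j j := by
      rw [hZ, transpose_mul, show Uᵀ * Wᵀ * (W * U) = Uᵀ * (Wᵀ * W) * U by
        simp only [Matrix.mul_assoc], hdiag]
    simpa [Matrix.mul_apply, pow_two] using h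
  have hYcol : ∀ j, ∑ i, Y i j ^ 2 ≤ 1 := by
    intro j
    have hpsd : (Uᵀ * (1 - Xᵀ * X) * U).PosSemidef := by
      have := hX.conjTranspose_mul_mul_same U
      rwa [conjTranspose_eq_transpose_of_trivial] at this
    have h0 := psd_diag_nonneg hpsd j
    have hexp : Uᵀ * (1 - Xᵀ * X) * U = 1 - Yᵀ * Y := by
      rw [hY, transpose_mul, mul_sub, mul_one, sub_mul, hUU]
      congr 1
      simp only [Matrix.mul_assoc]
    rw [hexp] at h0
    have hYY : (Yᵀ * Y) j j = ∑ i, Y i j ^ 2 := by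
      simp [Matrix.mul_apply, pow_two]
    simp only [Matrix.sub_apply, hYY, Matrix.one_apply_eq] at h0
    linarith
  rw [htr, trace_sqrt]
  have hexpand : (Yᵀ * Z).trace = ∑ j, ∑ i, Y i j * Z i j := by
    simp [Matrix.trace, Matrix.diag, Matrix.mul_apply]
  rw [hexpand]
  apply Finset.sum_le_sum
  intro j _
  have cs := Finset.sum_mul_sq_le_sq_mul_sq Finset.univ (fun i => Y i j) (fun i => Z i j)
  have h1 : ∑ i, Y i j * Z i j ≤ Real.sqrt ((∑ i, Y i j ^ 2) * (∑ i, Z i j ^ 2)) := by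
    have habs : ∑ i, Y i j * Z i j ≤ |∑ i, Y i j * Z i j| := le_abs_self _
    rw [← Real.sqrt_sq_eq_abs] at habs
    exact habs.trans (Real.sqrt_le_sqrt cs)
  refine h1.trans ?_
  rw [Real.sqrt_mul (by positivity), hZcol j]
  have h2 : Real.sqrt (∑ i, Y i j ^ 2) ≤ 1 := by
    rw [show (1:ℝ) = Real.sqrt 1 by simp]
    exact Real.sqrt_le_sqrt (hYcol j)
  nlinarith [Real.sqrt_nonneg (d j), Real.sqrt_nonneg (∑ i, Y i j ^ 2)]

lemma exists_dual {m : Type*} [Fintype m] (W : Matrix m n ℝ)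
    (hM : (Wᵀ * W).PosSemidef) :
    ∃ X : Matrix m n ℝ, (1 - Xᵀ * X).PosSemidef ∧ (Xᵀ * W).trace = hM.sqrt.trace := by
  classical
  set hH := hM.1 with hHdef
  set U : Matrix n n ℝ := (hH.eigenvectorUnitary : Matrix n n ℝ) with hUdef
  have hsU : star U = Uᵀ := by
    rw [star_eq_conjTranspose, conjTranspose_eq_transpose_of_trivial]
  have hUU : Uᵀ * U = 1 := by rw [← hsU]; exact Unitary.coe_star_mul_self _
  have hUU' : U * Uᵀ = 1 := by rw [← hsU]; exact Unitary.coe_mul_star_self _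
  set d := hH.eigenvalues with hddef
  have hd0 : ∀ i, 0 ≤ d i := hM.eigenvalues_nonneg
  have hspec : Wᵀ * W = U * diagonal d * Uᵀ := by
    rw [← hsU]; have := hH.spectral_theorem; rw [Unitary.conjStarAlgAut_apply] at this; simpa using this
  have key : ∀ (a b : n → ℝ), (U * diagonal a * Uᵀ) * (U * diagonal b * Uᵀ)
      = U * diagonal (fun i => a i * b i) * Uᵀ := by
    intro a b
    rw [show (U * diagonal a * Uᵀ) * (U * diagonal b * Uᵀ)
        = U * (diagonal a * ((Uᵀ * U) * diagonal b)) * Uᵀ by simp only [Matrix.mul_assoc],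
      hUU, one_mul, diagonal_mul_diagonal]
  set g : n → ℝ := fun i => if d i = 0 then 0 else (Real.sqrt (d i))⁻¹ with hgdef
  set P : Matrix n n ℝ := U * diagonal g * Uᵀ with hPdef
  have hPt : Pᵀ = P := by
    rw [hPdef, transpose_mul, transpose_mul, transpose_transpose, diagonal_transpose, mul_assoc]
  refine ⟨W * P, ?_, ?_⟩
  · have hXX : (W * P)ᵀ * (W * P) = U * diagonal (fun i => g i * d i * g i) * Uᵀ := by
      rw [transpose_mul, hPt,
        show P * Wᵀ * (W * P) = P * (Wᵀ * W) * P by simp only [Matrix.mul_assoc],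
        hspec, hPdef, key, key]
    have h1 : (1 : Matrix n n ℝ) = U * diagonal (fun _ : n => (1:ℝ)) * Uᵀ := by
      rw [diagonal_one, mul_one, hUU']
    have hsub : U * diagonal (fun _ : n => (1:ℝ)) * Uᵀ
        - U * diagonal (fun i => g i * d i * g i) * Uᵀ
        = U * diagonal (fun i => 1 - g i * d i * g i) * Uᵀ := by
      rw [← sub_mul, ← mul_sub, ← diagonal_sub]
    rw [hXX, h1, hsub]
    have hpsd : (diagonal (fun i => 1 - g i * d i * g i)).PosSemidef := by
      refine posSemidef_diagonal_iff.mpr fun i => ?_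
      by_cases h : d i = 0
      · simp [hgdef, h]
      · have hdpos : 0 < d i := lt_of_le_of_ne (hd0 i) (Ne.symm h)
        have hs : Real.sqrt (d i) * Real.sqrt (d i) = d i := Real.mul_self_sqrt (hd0 i)
        have hsne : Real.sqrt (d i) ≠ 0 := by positivity
        simp only [hgdef, if_neg h]
        rw [show (Real.sqrt (d i))⁻¹ * d i * (Real.sqrt (d i))⁻¹
            = (Real.sqrt (d i))⁻¹ * (Real.sqrt (d i) * Real.sqrt (d i)) * (Real.sqrt (d i))⁻¹
            by rw [hs]]
        field_simp
        norm_num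
    have := hpsd.mul_mul_conjTranspose_same U
    rwa [conjTranspose_eq_transpose_of_trivial] at this
  · have hXW : (W * P)ᵀ * W = P * (Wᵀ * W) := by
      rw [transpose_mul, hPt, Matrix.mul_assoc P Wᵀ W]
    have e : P * (Wᵀ * W) = U * diagonal (fun i => g i * d i) * Uᵀ := by
      rw [hspec, hPdef, key]
    rw [hXW, e, Matrix.trace_mul_cycle, hUU, one_mul, trace_diagonal, trace_sqrt]
    apply Finset.sum_congr rfl
    intro i _
    have he : hM.1.eigenvalues i = d i := rfl
    rw [he]
    by_cases h : d i = 0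
    · simp [hgdef, h]
    · have hs : Real.sqrt (d i) * Real.sqrt (d i) = d i := Real.mul_self_sqrt (hd0 i)
      have hsne : Real.sqrt (d i) ≠ 0 := by
        have : 0 < d i := lt_of_le_of_ne (hd0 i) (Ne.symm h)
        positivity
      simp only [hgdef, if_neg h]
      field_simp
      rw [sq, hs]

end StackNucAux

/-- For the stacked matrix `W = [W₁; W₂]`, the sum of singular values of `W` is at most the
sum of singular values of `W₁` plus that of `W₂`:
`trace √(WᵀW) ≤ trace √(W₁ᵀW₁) + trace √(W₂ᵀW₂)`. -/
theorem sum_singular_values_stack_le {m₁ m₂ n : ℕ}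
    (W₁ : Matrix (Fin m₁) (Fin n) ℝ) (W₂ : Matrix (Fin m₂) (Fin n) ℝ)
    (h₁ : (W₁ᵀ * W₁).PosSemidef) (h₂ : (W₂ᵀ * W₂).PosSemidef)
    (hW : (((Matrix.fromRows W₁ W₂))ᵀ * (Matrix.fromRows W₁ W₂)).PosSemidef) :
    hW.sqrt.trace ≤ h₁.sqrt.trace + h₂.sqrt.trace := by
  obtain ⟨X, hX1, hX2⟩ := StackNucAux.exists_dual (Matrix.fromRows W₁ W₂) hW
  set X₁ : Matrix (Fin m₁) (Fin n) ℝ := X.submatrix Sum.inl id with hX₁def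
  set X₂ : Matrix (Fin m₂) (Fin n) ℝ := X.submatrix Sum.inr id with hX₂def
  have hsplit : X = Matrix.fromRows X₁ X₂ := by
    ext (i | i) j <;> rfl
  have hXX : Xᵀ * X = X₁ᵀ * X₁ + X₂ᵀ * X₂ := by
    rw [hsplit, transpose_fromRows, fromCols_mul_fromRows]
  have hXW : Xᵀ * Matrix.fromRows W₁ W₂ = X₁ᵀ * W₁ + X₂ᵀ * W₂ := by
    rw [hsplit, transpose_fromRows, fromCols_mul_fromRows]
  have psd1 : (X₁ᵀ * X₁).PosSemidef := by
    have := Matrix.posSemidef_conjTranspose_mul_self X₁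
    rwa [conjTranspose_eq_transpose_of_trivial] at this
  have psd2 : (X₂ᵀ * X₂).PosSemidef := by
    have := Matrix.posSemidef_conjTranspose_mul_self X₂
    rwa [conjTranspose_eq_transpose_of_trivial] at this
  have hc1 : (1 - X₁ᵀ * X₁).PosSemidef := by
    have h : (1 : Matrix (Fin n) (Fin n) ℝ) - X₁ᵀ * X₁
        = (1 - Xᵀ * X) + X₂ᵀ * X₂ := by rw [hXX]; abel
    rw [h]; exact hX1.add psd2
  have hc2 : (1 - X₂ᵀ * X₂).PosSemidef := by
    have h : (1 : Matrix (Fin n) (Fin n) ℝ) - X₂ᵀ * X₂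
        = (1 - Xᵀ * X) + X₁ᵀ * X₁ := by rw [hXX]; abel
    rw [h]; exact hX1.add psd1
  calc hW.sqrt.trace = (Xᵀ * Matrix.fromRows W₁ W₂).trace := hX2.symm
    _ = (X₁ᵀ * W₁).trace + (X₂ᵀ * W₂).trace := by rw [hXW, trace_add]
    _ ≤ h₁.sqrt.trace + h₂.sqrt.trace :=
        add_le_add (StackNucAux.trace_le W₁ X₁ h₁ hc1) (StackNucAux.trace_le W₂ X₂ h₂ hc2)
end

section
/- Let W be an m×n matrix such that WᵀW = (a−b)I + bJ with a > b ≥ 0 (a variable-agnostic workload). Then all diagonal entries of √(WᵀW) are equal, and each equals ((n−1)√(a−b) + √(a+(n−1)b))/n. -/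
open Matrix

/-- For a variable-agnostic workload `W` (i.e. `WᵀW = (a−b)·I + b·J` with `a > b ≥ 0`), all
diagonal entries of `√(WᵀW)` are equal, each being `((n−1)√(a−b) + √(a+(n−1)b))/n`. -/
theorem sqrt_gram_diag_variable_agnostic {m n : ℕ} (a b : ℝ)
    (hab : b < a) (hb : 0 ≤ b)
    (W : Matrix (Fin m) (Fin n) ℝ)
    (hps : (Wᵀ * W).PosSemidef)
    (hGram : Wᵀ * W
      = (a - b) • (1 : Matrix (Fin n) (Fin n) ℝ) + b • Matrix.of (fun _ _ => (1 : ℝ))) :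
    ∀ i : Fin n, hps.sqrt i i
      = (((n : ℝ) - 1) * Real.sqrt (a - b) + Real.sqrt (a + ((n : ℝ) - 1) * b)) / n := by
  intro i
  have hn : 0 < n := i.pos
  have hn' : (n : ℝ) ≠ 0 := Nat.cast_ne_zero.mpr hn.ne'
  set s1 := Real.sqrt (a - b) with hs1
  set s2 := Real.sqrt (a + ((n : ℝ) - 1) * b) with hs2
  have hs1sq : s1 ^ 2 = a - b := Real.sq_sqrt (by linarith)
  have hnb : 0 ≤ ((n : ℝ) - 1) * b := mul_nonneg (by simp [Nat.one_le_cast.mpr hn]) hb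
  have hs2sq : s2 ^ 2 = a + ((n : ℝ) - 1) * b := Real.sq_sqrt (by linarith)
  have hs1nn : 0 ≤ s1 := Real.sqrt_nonneg _
  have hcle : s1 ≤ s2 := Real.sqrt_le_sqrt (by nlinarith)
  set c := (s2 - s1) / n with hc
  have hcnn : 0 ≤ c := div_nonneg (by linarith) (by positivity)
  set J : Matrix (Fin n) (Fin n) ℝ := Matrix.of (fun _ _ => (1 : ℝ)) with hJ
  set S := s1 • (1 : Matrix (Fin n) (Fin n) ℝ) + c • J with hS
  have hJmul : J * J = (n : ℝ) • J := by
    ext i j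
    simp [hJ, Matrix.mul_apply, Matrix.smul_apply]
  have hSherm : S.IsHermitian := by
    ext i j
    simp only [hS, hJ, Matrix.conjTranspose_apply, Matrix.add_apply, Matrix.smul_apply,
      Matrix.of_apply, Matrix.one_apply, star_trivial]
    by_cases h : i = j <;> simp [h, Matrix.one_apply, eq_comm]
  have hSpsd : S.PosSemidef := by
    refine Matrix.PosSemidef.of_dotProduct_mulVec_nonneg hSherm fun x => ?_
    have hmv : ∀ j, S.mulVec x j = s1 * x j + c * ∑ k, x k := by
      intro j
      simp [hS, hJ, Matrix.mulVec, dotProduct, Matrix.one_apply, add_mul, ite_mul,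
        zero_mul, Finset.sum_add_distrib, Finset.sum_ite_eq, Finset.mul_sum, mul_assoc]
    have hform : x ⬝ᵥ S.mulVec x = s1 * (∑ i, x i * x i) + c * (∑ i, x i) ^ 2 := by
      simp only [dotProduct, hmv, mul_add, Finset.sum_add_distrib]
      congr 1
      · rw [Finset.mul_sum]
        exact Finset.sum_congr rfl fun j _ => by ring
      · rw [show (∑ j, x j * (c * ∑ k, x k)) = (∑ j, x j) * (c * ∑ k, x k) from
          (Finset.sum_mul _ _ _).symm]
        ring
    have hsx : star x = x := funext fun j => star_trivial _
    rw [show star x ⬝ᵥ S *ᵥ x = x ⬝ᵥ S.mulVec x by rw [hsx], hform]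
    have h1 : 0 ≤ ∑ i, x i * x i := Finset.sum_nonneg fun i _ => mul_self_nonneg _
    positivity
  have hSS : S * S = (s1 * s1) • (1 : Matrix (Fin n) (Fin n) ℝ)
      + (s1 * c + c * s1 + c * (c * (n : ℝ))) • J := by
    rw [hS, add_mul, mul_add, mul_add]
    simp only [smul_mul_assoc, Matrix.mul_smul, one_mul, Matrix.mul_one, hJmul, smul_smul]
    module
  have hsq : S ^ 2 = Wᵀ * W := by
    rw [pow_two, hSS, hGram]
    congr 1
    · rw [show s1 * s1 = a - b by nlinarith]
    · rw [show s1 * c + c * s1 + c * (c * (n : ℝ)) = b by rw [hc]; field_simp; nlinarith]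
  have hSeq : S = hps.sqrt := by
    open scoped MatrixOrder in
    have h1 : hps.sqrt = CFC.sqrt (Wᵀ * W) := by
      rw [CFC.sqrt_eq_cfc, cfc_nnreal_eq_real _ (Wᵀ * W) hps.nonneg, hps.1.cfc_eq]
      simp only [IsHermitian.cfc, Matrix.PosSemidef.sqrt, Unitary.conjStarAlgAut_apply]
      congr 3
      funext k
      simp [Real.coe_sqrt, hps.eigenvalues_nonneg k]
    open scoped MatrixOrder in
    rw [h1, eq_comm, CFC.sqrt_eq_iff _ _ hps.nonneg hSpsd.nonneg, ← sq, hsq]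
  rw [← hSeq]
  simp only [hS, hJ, Matrix.add_apply, Matrix.smul_apply, Matrix.one_apply_eq, Matrix.of_apply,
    smul_eq_mul, mul_one, hc]
  field_simp
  ring
end
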